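/- For every u in C_c^1(ℝ²) (continuously differentiable with compact support) one has the Ladyzhenskaya-type interpolation inequality ‖u‖_{L³(ℝ²)} ≤ 2^{1/3} · ‖∇u‖_{L²(ℝ²)}^{1/3} · ‖u‖_{L²(ℝ²)}^{2/3}. -/

import Mathlib

open MeasureTheory

/-- Cauchy–Schwarz for integrals of continuous compactly supported functions. -/
lemma lady_cs2 (f g : ℝ × ℝ → ℝ) (hf : Continuous f) (hg : Continuous g)
    (hfs : HasCompactSupport f) (hgs : HasCompactSupport g) :
    ∫ p, |f p * g p| ≤ (∫ p, f p ^ 2) ^ ((1:ℝ)/2) * (∫ p, g p ^ 2) ^ ((1:ℝ)/2) := by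
  have h2 : ENNReal.ofReal (2:ℝ) = 2 := by norm_num
  have hmf : MemLp (fun p => |f p|) (ENNReal.ofReal 2) := by
    rw [h2]; exact (hf.abs.memLp_of_hasCompactSupport (hfs.comp_left (g := abs) abs_zero))
  have hmg : MemLp (fun p => |g p|) (ENNReal.ofReal 2) := by
    rw [h2]; exact (hg.abs.memLp_of_hasCompactSupport (hgs.comp_left (g := abs) abs_zero))
  have := integral_mul_le_Lp_mul_Lq_of_nonneg
    (Real.holderConjugate_iff_eq_conjExponent (by norm_num) |>.mpr (by norm_num))
    (Filter.Eventually.of_forall fun p => abs_nonneg (f p))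
    (Filter.Eventually.of_forall fun p => abs_nonneg (g p)) hmf hmg
  calc ∫ p, |f p * g p| = ∫ p, |f p| * |g p| := by simp [abs_mul]
  _ ≤ (∫ p, |f p| ^ (2:ℝ)) ^ (1/(2:ℝ)) * (∫ p, |g p| ^ (2:ℝ)) ^ (1/(2:ℝ)) := this
  _ = (∫ p, f p ^ 2) ^ ((1:ℝ)/2) * (∫ p, g p ^ 2) ^ ((1:ℝ)/2) := by
      norm_num [Real.rpow_natCast, sq_abs]

/-- 1D bound: a C¹ function vanishing outside a bounded set satisfies
`g x ^ 2 ≤ 2 ∫ |g g'|`. -/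
lemma lady_oneDim (g g' : ℝ → ℝ) (hg : ∀ t, HasDerivAt g (g' t) t)
    (hc' : Continuous g') (R : ℝ) (hvan : ∀ t, R < |t| → g t = 0) (x : ℝ) :
    g x ^ 2 ≤ 2 * ∫ t, |g t * g' t| := by
  have hcg : Continuous g := by
    rw [continuous_iff_continuousAt]; exact fun t => (hg t).continuousAt
  have hint : Integrable (fun t => g t * g' t) := by
    refine ((hcg.mul hc').integrable_of_hasCompactSupport ?_)
    refine HasCompactSupport.intro (isCompact_Icc (a := -R) (b := R)) fun t ht => ?_
    have : R < |t| := by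
      simp only [Set.mem_Icc, not_and_or, not_le] at ht
      rcases abs_cases t with ⟨he, hs⟩ | ⟨he, hs⟩ <;> rcases ht with h | h <;> linarith
    rw [Pi.mul_apply, hvan t this, zero_mul]
  -- choose a point `a ≤ x` to the left of the support
  set a : ℝ := -(|x| ⊔ R) - 1 with ha
  have hax : a ≤ x := by
    have h1 : |x| ≤ |x| ⊔ R := le_sup_left
    have := neg_abs_le x
    simp only [ha]; linarith
  have hga : g a = 0 := by
    refine hvan a ?_
    have h1 : R ≤ |x| ⊔ R := le_sup_right
    have h2 : (0:ℝ) ≤ |x| ⊔ R := le_trans (abs_nonneg x) le_sup_left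
    rw [abs_of_nonpos (by simp only [ha]; linarith)]
    simp only [ha]; linarith
  have hderiv : ∀ t ∈ Set.uIcc a x, HasDerivAt (fun s => g s ^ 2) (2 * g t * g' t) t := by
    intro t _
    have : HasDerivAt (fun s => g s ^ 2) _ t := (hg t).pow 2
    simpa [pow_one, mul_comm, mul_assoc, mul_left_comm] using this
  have hcont : Continuous fun t => 2 * g t * g' t :=
    (continuous_const.mul hcg).mul hc'
  have hftc := intervalIntegral.integral_eq_sub_of_hasDerivAt hderiv
    (hcont.intervalIntegrable a x)
  have key : g x ^ 2 = ∫ t in a..x, 2 * g t * g' t := by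
    rw [hftc, hga]; ring
  have habs : Integrable (fun t => |2 * g t * g' t|) := by
    have : (fun t => |2 * g t * g' t|) = fun t => 2 * |g t * g' t| := by
      funext t; rw [mul_assoc, abs_mul, abs_two]
    rw [this]
    exact (hint.abs.const_mul 2)
  calc g x ^ 2 = ∫ t in a..x, 2 * g t * g' t := key
    _ ≤ ∫ t in a..x, |2 * g t * g' t| := by
        refine intervalIntegral.integral_mono_on hax (hcont.intervalIntegrable a x)
          (hcont.abs.intervalIntegrable a x) fun t _ => le_abs_self _
    _ = ∫ t in Set.Ioc a x, |2 * g t * g' t| := intervalIntegral.integral_of_le hax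
    _ ≤ ∫ t, |2 * g t * g' t| :=
        setIntegral_le_integral habs (Filter.Eventually.of_forall fun t => abs_nonneg _)
    _ = 2 * ∫ t, |g t * g' t| := by
        simp_rw [mul_assoc, abs_mul, abs_two, integral_const_mul]


set_option maxHeartbeats 1000000 in
lemma lady_main (u : ℝ × ℝ → ℝ) (hu : ContDiff ℝ 1 u)
    (hsupp : HasCompactSupport u) :
    (∫ p : ℝ × ℝ, |u p| ^ 3) ^ ((1 : ℝ) / 3) ≤
      (2 : ℝ) ^ ((1 : ℝ) / 3) *
        ((∫ p : ℝ × ℝ, ((fderiv ℝ u p) (1, 0)) ^ 2 + ((fderiv ℝ u p) (0, 1)) ^ 2) ^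
            ((1 : ℝ) / 2)) ^ ((1 : ℝ) / 3) *
        ((∫ p : ℝ × ℝ, (u p) ^ 2) ^ ((1 : ℝ) / 2)) ^ ((2 : ℝ) / 3) := by
  set ux : ℝ × ℝ → ℝ := fun p => (fderiv ℝ u p) (1, 0) with hux
  set uy : ℝ × ℝ → ℝ := fun p => (fderiv ℝ u p) (0, 1) with huy
  have hcu : Continuous u := hu.continuous
  have hcf : Continuous (fderiv ℝ u) := hu.continuous_fderiv one_ne_zero
  have hcux : Continuous ux := hcf.clm_apply continuous_const
  have hcuy : Continuous uy := hcf.clm_apply continuous_const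
  have hsux : HasCompactSupport ux :=
    (hsupp.fderiv ℝ).comp_left (g := fun L : (ℝ × ℝ) →L[ℝ] ℝ => L (1, 0)) rfl
  have hsuy : HasCompactSupport uy :=
    (hsupp.fderiv ℝ).comp_left (g := fun L : (ℝ × ℝ) →L[ℝ] ℝ => L (0, 1)) rfl
  -- compact supports
  have hs_u2 : HasCompactSupport (fun p => u p ^ 2) :=
    hsupp.comp_left (g := fun t : ℝ => t ^ 2) (by simp)
  have hs_u4 : HasCompactSupport (fun p => u p ^ 4) :=
    hsupp.comp_left (g := fun t : ℝ => t ^ 4) (by simp)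
  have hs_au3 : HasCompactSupport (fun p => |u p| ^ 3) :=
    hsupp.comp_left (g := fun t : ℝ => |t| ^ 3) (by simp)
  have hs_uux : HasCompactSupport (fun p => u p * ux p) := hsupp.mul_right
  have hs_uuy : HasCompactSupport (fun p => u p * uy p) := hsupp.mul_right
  -- integrability
  have int_u2 : Integrable (fun p => u p ^ 2) := (hcu.pow 2).integrable_of_hasCompactSupport hs_u2
  have int_u4 : Integrable (fun p => u p ^ 4) := (hcu.pow 4).integrable_of_hasCompactSupport hs_u4
  have int_ux2 : Integrable (fun p => ux p ^ 2) :=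
    (hcux.pow 2).integrable_of_hasCompactSupport
      (hsux.comp_left (g := fun t : ℝ => t ^ 2) (by simp) : HasCompactSupport fun p => ux p ^ 2)
  have int_uy2 : Integrable (fun p => uy p ^ 2) :=
    (hcuy.pow 2).integrable_of_hasCompactSupport
      (hsuy.comp_left (g := fun t : ℝ => t ^ 2) (by simp) : HasCompactSupport fun p => uy p ^ 2)
  have int_uux : Integrable (fun p => |u p * ux p|) :=
    ((hcu.mul hcux).abs).integrable_of_hasCompactSupport
      (hs_uux.comp_left (g := abs) abs_zero)
  have int_uuy : Integrable (fun p => |u p * uy p|) :=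
    ((hcu.mul hcuy).abs).integrable_of_hasCompactSupport
      (hs_uuy.comp_left (g := abs) abs_zero)
  -- radius of support
  obtain ⟨R, hRsub⟩ := hsupp.isBounded.subset_closedBall (0 : ℝ × ℝ)
  have hvanish : ∀ p : ℝ × ℝ, R < ‖p‖ → u p = 0 := by
    intro p hp
    refine image_eq_zero_of_notMem_tsupport fun hmem => ?_
    have := hRsub hmem
    rw [Metric.mem_closedBall, dist_zero_right] at this
    linarith
  -- slice bounds
  have slice_x : ∀ x y : ℝ, u (x, y) ^ 2 ≤ 2 * ∫ t, |u (t, y) * ux (t, y)| := by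
    intro x y
    refine lady_oneDim (fun t => u (t, y)) (fun t => ux (t, y)) ?_
      (hcux.comp (continuous_id.prodMk continuous_const)) R ?_ x
    · intro t
      exact ((hu.differentiable one_ne_zero) (t, y)).hasFDerivAt.comp_hasDerivAt t
        ((hasDerivAt_id t).prodMk (hasDerivAt_const t y))
    · intro t ht
      refine hvanish (t, y) (lt_of_lt_of_le ht ?_)
      simpa [Real.norm_eq_abs] using norm_fst_le ((t, y) : ℝ × ℝ)
  have slice_y : ∀ x y : ℝ, u (x, y) ^ 2 ≤ 2 * ∫ t, |u (x, t) * uy (x, t)| := by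
    intro x y
    refine lady_oneDim (fun t => u (x, t)) (fun t => uy (x, t)) ?_
      (hcuy.comp (continuous_const.prodMk continuous_id)) R ?_ y
    · intro t
      exact ((hu.differentiable one_ne_zero) (x, t)).hasFDerivAt.comp_hasDerivAt t
        ((hasDerivAt_const t x).prodMk (hasDerivAt_id t))
    · intro t ht
      refine hvanish (x, t) (lt_of_lt_of_le ht ?_)
      simpa [Real.norm_eq_abs] using norm_snd_le ((x, t) : ℝ × ℝ)
  -- the two marginal functions
  set F : ℝ → ℝ := fun y => ∫ t, |u (t, y) * ux (t, y)| with hF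
  set G : ℝ → ℝ := fun x => ∫ t, |u (x, t) * uy (x, t)| with hG
  have intF : Integrable F := int_uux.integral_prod_right
  have intG : Integrable G := int_uuy.integral_prod_left
  have pointwise : ∀ p : ℝ × ℝ, u p ^ 4 ≤ 4 * (G p.1 * F p.2) := by
    intro p
    have h1 : u p ^ 2 ≤ 2 * F p.2 := slice_x p.1 p.2
    have h2 : u p ^ 2 ≤ 2 * G p.1 := slice_y p.1 p.2
    calc u p ^ 4 = u p ^ 2 * u p ^ 2 := by ring
      _ ≤ (2 * G p.1) * (2 * F p.2) :=
          mul_le_mul h2 h1 (sq_nonneg _) (le_trans (sq_nonneg _) h2)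
      _ = 4 * (G p.1 * F p.2) := by ring
  have int_RHS : Integrable (fun p : ℝ × ℝ => 4 * (G p.1 * F p.2)) :=
    (intG.mul_prod intF).const_mul 4
  have hGeq : ∫ x, G x = ∫ p : ℝ × ℝ, |u p * uy p| :=
    integral_integral (f := fun x y => |u (x, y) * uy (x, y)|) int_uuy
  have hFeq : ∫ y, F y = ∫ p : ℝ × ℝ, |u p * ux p| :=
    (integral_prod_symm (fun p : ℝ × ℝ => |u p * ux p|) int_uux).symm
  set B : ℝ := ∫ p : ℝ × ℝ, u p ^ 2 with hB'
  set X : ℝ := ∫ p : ℝ × ℝ, ux p ^ 2 with hX'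
  set Y : ℝ := ∫ p : ℝ × ℝ, uy p ^ 2 with hY'
  have hB : (0:ℝ) ≤ B := integral_nonneg fun p => sq_nonneg _
  have hX : (0:ℝ) ≤ X := integral_nonneg fun p => sq_nonneg _
  have hY : (0:ℝ) ≤ Y := integral_nonneg fun p => sq_nonneg _
  have hI4 : (∫ p : ℝ × ℝ, u p ^ 4) ≤ 4 * ((∫ x, G x) * (∫ y, F y)) := by
    calc (∫ p : ℝ × ℝ, u p ^ 4) ≤ ∫ p : ℝ × ℝ, 4 * (G p.1 * F p.2) :=
          integral_mono int_u4 int_RHS pointwise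
      _ = 4 * ((∫ x, G x) * (∫ y, F y)) := by
          rw [integral_const_mul]
          exact congrArg (fun r => 4 * r) (integral_prod_mul (μ := (volume : Measure ℝ))
            (ν := (volume : Measure ℝ)) G F)
  rw [hGeq, hFeq] at hI4
  -- Cauchy–Schwarz on the two factors
  have csx : (∫ p : ℝ × ℝ, |u p * ux p|) ≤ B ^ ((1:ℝ)/2) * X ^ ((1:ℝ)/2) :=
    lady_cs2 u ux hcu hcux hsupp hsux
  have csy : (∫ p : ℝ × ℝ, |u p * uy p|) ≤ B ^ ((1:ℝ)/2) * Y ^ ((1:ℝ)/2) :=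
    lady_cs2 u uy hcu hcuy hsupp hsuy
  have hI4b : (∫ p : ℝ × ℝ, u p ^ 4) ≤
      4 * ((B ^ ((1:ℝ)/2) * Y ^ ((1:ℝ)/2)) * (B ^ ((1:ℝ)/2) * X ^ ((1:ℝ)/2))) := by
    refine le_trans hI4 ?_
    have h0x : (0:ℝ) ≤ ∫ p : ℝ × ℝ, |u p * ux p| := integral_nonneg fun p => abs_nonneg _
    have h0y : (0:ℝ) ≤ ∫ p : ℝ × ℝ, |u p * uy p| := integral_nonneg fun p => abs_nonneg _
    have := mul_le_mul csy csx h0x (by positivity)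
    linarith
  have hBB : B ^ ((1:ℝ)/2) * B ^ ((1:ℝ)/2) = B := by
    rw [← Real.rpow_add' hB (by norm_num)]; norm_num
  have hsx2 : (X ^ ((1:ℝ)/2)) ^ 2 = X := by
    rw [← Real.rpow_natCast (X ^ ((1:ℝ)/2)) 2, ← Real.rpow_mul hX]; norm_num
  have hsy2 : (Y ^ ((1:ℝ)/2)) ^ 2 = Y := by
    rw [← Real.rpow_natCast (Y ^ ((1:ℝ)/2)) 2, ← Real.rpow_mul hY]; norm_num
  have hXY : X ^ ((1:ℝ)/2) * Y ^ ((1:ℝ)/2) ≤ (X + Y) / 2 := by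
    nlinarith [sq_nonneg (X ^ ((1:ℝ)/2) - Y ^ ((1:ℝ)/2))]
  have hI4f : (∫ p : ℝ × ℝ, u p ^ 4) ≤ 2 * (X + Y) * B := by
    have heq : 4 * ((B ^ ((1:ℝ)/2) * Y ^ ((1:ℝ)/2)) * (B ^ ((1:ℝ)/2) * X ^ ((1:ℝ)/2))) =
        4 * B * (X ^ ((1:ℝ)/2) * Y ^ ((1:ℝ)/2)) := by
      linear_combination 4 * (X ^ ((1:ℝ)/2) * Y ^ ((1:ℝ)/2)) * hBB
    refine le_trans hI4b ?_
    rw [heq]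
    calc 4 * B * (X ^ ((1:ℝ)/2) * Y ^ ((1:ℝ)/2)) ≤ 4 * B * ((X + Y) / 2) := by
          have h4B : (0:ℝ) ≤ 4 * B := by linarith
          exact mul_le_mul_of_nonneg_left hXY h4B
      _ = 2 * (X + Y) * B := by ring
  -- Cauchy–Schwarz for the cube
  have hI3 : (∫ p : ℝ × ℝ, |u p| ^ 3) ≤ B ^ ((1:ℝ)/2) * (∫ p : ℝ × ℝ, u p ^ 4) ^ ((1:ℝ)/2) := by
    have := lady_cs2 u (fun p => u p ^ 2) hcu (hcu.pow 2) hsupp hs_u2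
    have habs : ∀ p : ℝ × ℝ, |u p * u p ^ 2| = |u p| ^ 3 := by
      intro p; rw [abs_mul, abs_pow]; ring
    have hp4 : ∀ p : ℝ × ℝ, (u p ^ 2) ^ 2 = u p ^ 4 := fun p => by ring
    simpa only [habs, hp4] using this
  have hI4nn : (0:ℝ) ≤ ∫ p : ℝ × ℝ, u p ^ 4 :=
    integral_nonneg fun p => by positivity
  have hI3nn : (0:ℝ) ≤ ∫ p : ℝ × ℝ, |u p| ^ 3 :=
    integral_nonneg fun p => by positivity
  have hS : (0:ℝ) ≤ X + Y := by linarith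
  have key : (∫ p : ℝ × ℝ, |u p| ^ 3) ≤ 2 * (X + Y) ^ ((1:ℝ)/2) * B := by
    have h1 : (∫ p : ℝ × ℝ, u p ^ 4) ^ ((1:ℝ)/2) ≤ (2 * (X + Y) * B) ^ ((1:ℝ)/2) :=
      Real.rpow_le_rpow hI4nn hI4f (by norm_num)
    have h2 : (2 * (X + Y) * B) ^ ((1:ℝ)/2) =
        (2:ℝ) ^ ((1:ℝ)/2) * (X + Y) ^ ((1:ℝ)/2) * B ^ ((1:ℝ)/2) := by
      rw [Real.mul_rpow (by positivity) hB, Real.mul_rpow (by norm_num) hS]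
    calc (∫ p : ℝ × ℝ, |u p| ^ 3)
        ≤ B ^ ((1:ℝ)/2) * (∫ p : ℝ × ℝ, u p ^ 4) ^ ((1:ℝ)/2) := hI3
      _ ≤ B ^ ((1:ℝ)/2) * ((2:ℝ) ^ ((1:ℝ)/2) * (X + Y) ^ ((1:ℝ)/2) * B ^ ((1:ℝ)/2)) := by
          refine mul_le_mul_of_nonneg_left (le_trans h1 (le_of_eq h2)) (by positivity)
      _ = (2:ℝ) ^ ((1:ℝ)/2) * (X + Y) ^ ((1:ℝ)/2) * (B ^ ((1:ℝ)/2) * B ^ ((1:ℝ)/2)) := by ring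
      _ = (2:ℝ) ^ ((1:ℝ)/2) * (X + Y) ^ ((1:ℝ)/2) * B := by rw [hBB]
      _ ≤ 2 * (X + Y) ^ ((1:ℝ)/2) * B := by
          have h2le : (2:ℝ) ^ ((1:ℝ)/2) ≤ 2 := by
            calc (2:ℝ) ^ ((1:ℝ)/2) ≤ (2:ℝ) ^ (1:ℝ) :=
                Real.rpow_le_rpow_of_exponent_le (by norm_num) (by norm_num)
              _ = 2 := Real.rpow_one 2
          exact mul_le_mul_of_nonneg_right
            (mul_le_mul_of_nonneg_right h2le (Real.rpow_nonneg hS _)) hB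
  -- assemble
  have hA : (∫ p : ℝ × ℝ, ux p ^ 2 + uy p ^ 2) = X + Y := integral_add int_ux2 int_uy2
  rw [hA]
  have hfin : (∫ p : ℝ × ℝ, |u p| ^ 3) ^ ((1:ℝ)/3) ≤ (2 * (X + Y) ^ ((1:ℝ)/2) * B) ^ ((1:ℝ)/3) :=
    Real.rpow_le_rpow hI3nn key (by norm_num)
  refine le_trans hfin (le_of_eq ?_)
  rw [Real.mul_rpow (by positivity) hB, Real.mul_rpow (by norm_num) (by positivity),
    ← Real.rpow_mul hS, ← Real.rpow_mul hB]
  norm_num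

theorem ladyzhenskaya_L3 (u : ℝ × ℝ → ℝ) (hu : ContDiff ℝ 1 u)
    (hsupp : HasCompactSupport u) :
    (∫ p : ℝ × ℝ, |u p| ^ 3) ^ ((1 : ℝ) / 3) ≤
      (2 : ℝ) ^ ((1 : ℝ) / 3) *
        ((∫ p : ℝ × ℝ, ((fderiv ℝ u p) (1, 0)) ^ 2 + ((fderiv ℝ u p) (0, 1)) ^ 2) ^
            ((1 : ℝ) / 2)) ^ ((1 : ℝ) / 3) *
        ((∫ p : ℝ × ℝ, (u p) ^ 2) ^ ((1 : ℝ) / 2)) ^ ((2 : ℝ) / 3) :=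
  lady_main u hu hsupp
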